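/- Let N ≥ 1, ε > 0, K = ε·(J − I) with J the N×N all-ones complex matrix, and let x₀ ∈ ℂ^N have nonzero mean c = (1/N)∑_j (x₀)_j ≠ 0. Let x(t) = exp(tK)·x₀ and define the order parameter R(t) = (1/N)·|∑_j x_j(t)/|x_j(t)||, which is well defined for all sufficiently large t since each x_j(t) is eventually nonzero. Then R(t) → 1 as t → +∞. -/

import Mathlib

open NormedSpace

theorem exp_mulVec_eigen {n : ℕ} (A : Matrix (Fin n) (Fin n) ℂ) (v : Fin n → ℂ) (μ : ℂ)
    (h : A.mulVec v = μ • v) : (exp A).mulVec v = Complex.exp μ • v := by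
  letI : SeminormedRing (Matrix (Fin n) (Fin n) ℂ) := Matrix.linftyOpSemiNormedRing
  letI : NormedRing (Matrix (Fin n) (Fin n) ℂ) := Matrix.linftyOpNormedRing
  letI : NormedAlgebra ℂ (Matrix (Fin n) (Fin n) ℂ) := Matrix.linftyOpNormedAlgebra
  have hpow : ∀ k : ℕ, (A ^ k).mulVec v = μ ^ k • v := by
    intro k
    induction k with
    | zero => simp [Matrix.mulVec_one]
    | succ k ih =>
      rw [pow_succ', pow_succ', ← Matrix.mulVec_mulVec, ih, Matrix.mulVec_smul, h,
        smul_smul, mul_comm]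
  let f : Matrix (Fin n) (Fin n) ℂ →ₗ[ℂ] (Fin n → ℂ) :=
    { toFun := fun M => M.mulVec v
      map_add' := fun M₁ M₂ => Matrix.add_mulVec M₁ M₂ v
      map_smul' := fun a M => Matrix.smul_mulVec a M v }
  let F : Matrix (Fin n) (Fin n) ℂ →L[ℂ] (Fin n → ℂ) := f.toContinuousLinearMap
  have hF : ∀ M, F M = M.mulVec v := fun _ => rfl
  have hsum : Summable fun k : ℕ => ((k.factorial : ℂ))⁻¹ * μ ^ k := by
    simpa [smul_eq_mul] using expSeries_summable' (𝕂 := ℂ) μ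
  rw [exp_eq_tsum ℂ, ← hF, F.map_tsum (expSeries_summable' (𝕂 := ℂ) A)]
  have h1 : ∀ k : ℕ, F ((k.factorial : ℂ)⁻¹ • A ^ k) = ((k.factorial : ℂ)⁻¹ * μ ^ k) • v := by
    intro k
    rw [map_smul, hF, hpow, smul_smul]
  have h2 : Complex.exp μ = ∑' k : ℕ, ((k.factorial : ℂ))⁻¹ * μ ^ k := by
    rw [Complex.exp_eq_exp_ℂ, exp_eq_tsum ℂ]
    simp [smul_eq_mul]
  simp_rw [h1]
  rw [h2, hsum.tsum_smul_const]

open NormedSpace Filter in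
/-- Complete graph, attractive coupling, nonzero mean: each `x_j(t)` is eventually nonzero,
and the Kuramoto order parameter `R(t) = (1/N)|∑_j x_j(t)/|x_j(t)||` tends to `1`
as `t → +∞`: complete phase synchronization. -/
theorem complete_graph_order_parameter_tendsto_one
    (N : ℕ) (hN : 1 ≤ N) (ε : ℝ) (hε : 0 < ε)
    (J : Matrix (Fin N) (Fin N) ℂ) (hJ : ∀ i j, J i j = 1)
    (K : Matrix (Fin N) (Fin N) ℂ) (hK : K = (ε : ℂ) • (J - 1))
    (x₀ : Fin N → ℂ) (c : ℂ) (hc : c = (1 / (N : ℂ)) * ∑ j : Fin N, x₀ j) (hc0 : c ≠ 0)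
    (x : ℝ → Fin N → ℂ) (hx : ∀ t, x t = (exp (t • K)).mulVec x₀)
    (R : ℝ → ℝ)
    (hR : ∀ t, R t = (1 / (N : ℝ)) *
      ‖∑ j : Fin N, x t j / (‖x t j‖ : ℂ)‖) :
    (∀ᶠ t in atTop, ∀ j : Fin N, x t j ≠ 0) ∧
    Tendsto R atTop (nhds 1) := by
  have hN0 : (N : ℝ) ≠ 0 := by positivity
  have hNC : (N : ℂ) ≠ 0 := by exact_mod_cast (Nat.cast_ne_zero (R := ℂ)).mpr (by omega)
  -- general mulVec formula for K
  have hKgen : ∀ v : Fin N → ℂ, K.mulVec v = fun j => (ε : ℂ) * ((∑ k, v k) - v j) := by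
    intro v
    funext j
    rw [hK, Matrix.smul_mulVec, Matrix.sub_mulVec, Matrix.one_mulVec]
    simp only [Pi.smul_apply, Pi.sub_apply, smul_eq_mul]
    congr 2
    simp [Matrix.mulVec, dotProduct, hJ]
  set w : Fin N → ℂ := fun _ => c with hw
  set u : Fin N → ℂ := fun j => x₀ j - c with hu
  have hsumx₀ : ∑ j, x₀ j = (N : ℂ) * c := by
    rw [hc]; field_simp
  have hsumu : ∑ k, u k = 0 := by
    simp only [hu, Finset.sum_sub_distrib, hsumx₀, Finset.sum_const, Finset.card_univ,
      Fintype.card_fin, nsmul_eq_mul, sub_self]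
  have hKw : K.mulVec w = ((ε : ℂ) * ((N : ℂ) - 1)) • w := by
    rw [hKgen]
    funext j
    simp only [hw, Pi.smul_apply, smul_eq_mul, Finset.sum_const, Finset.card_univ,
      Fintype.card_fin, nsmul_eq_mul]
    ring
  have hKu : K.mulVec u = (-(ε : ℂ)) • u := by
    rw [hKgen]
    funext j
    simp only [hsumu, Pi.smul_apply, smul_eq_mul]
    ring
  -- formula for x t j
  have hform : ∀ (t : ℝ) (j : Fin N),
      x t j = Complex.exp ((t : ℂ) * ((ε : ℂ) * ((N : ℂ) - 1))) * c
        + Complex.exp ((t : ℂ) * (-(ε : ℂ))) * (x₀ j - c) := by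
    intro t j
    have hsmul : t • K = (t : ℂ) • K := by
      funext i k; simp [Matrix.smul_apply, Complex.real_smul]
    have h1 : (t • K).mulVec w = ((t : ℂ) * ((ε : ℂ) * ((N : ℂ) - 1))) • w := by
      rw [hsmul, Matrix.smul_mulVec, hKw, smul_smul]
    have h2 : (t • K).mulVec u = ((t : ℂ) * (-(ε : ℂ))) • u := by
      rw [hsmul, Matrix.smul_mulVec, hKu, smul_smul]
    have hx₀ : x₀ = w + u := by funext j; simp [hw, hu]
    have := congrFun (hx t) j
    rw [hx₀, Matrix.mulVec_add, exp_mulVec_eigen _ w _ h1, exp_mulVec_eigen _ u _ h2] at this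
    simpa [hw, hu, mul_comm] using this
  set r : ℝ → ℝ := fun t => Real.exp (t * (ε * ((N : ℝ) - 1))) with hr
  set z : ℝ → Fin N → ℂ := fun t j => c + (Real.exp (-(t * (ε * (N : ℝ)))) : ℂ) * (x₀ j - c)
    with hz
  have hrpos : ∀ t, 0 < r t := fun t => Real.exp_pos _
  have hxz : ∀ t j, x t j = (r t : ℂ) * z t j := by
    intro t j
    rw [hform t j, hz, hr]
    simp only
    rw [mul_add]
    congr 1
    · rw [Complex.ofReal_exp]
      push_cast
      ring_nf
    · rw [← mul_assoc]
      congr 1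
      rw [Complex.ofReal_exp, Complex.ofReal_exp, ← Complex.exp_add]
      congr 1
      push_cast
      ring
  -- z tends to the constant c
  have hzt : ∀ j, Tendsto (fun t => z t j) atTop (nhds c) := by
    intro j
    have h0 : Tendsto (fun t : ℝ => Real.exp (-(t * (ε * (N : ℝ))))) atTop (nhds 0) := by
      apply Real.tendsto_exp_atBot.comp
      apply tendsto_neg_atBot_iff.mpr
      apply Tendsto.atTop_mul_const (by positivity) tendsto_id
    have : Tendsto (fun t => ((Real.exp (-(t * (ε * (N : ℝ)))) : ℝ) : ℂ)) atTop (nhds 0) := by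
      exact_mod_cast (Complex.continuous_ofReal.tendsto 0).comp h0
    have := (this.mul_const (x₀ j - c)).const_add c
    simpa [hz] using this
  -- eventually all z t j ≠ 0
  have hzne : ∀ᶠ t in atTop, ∀ j, z t j ≠ 0 := by
    rw [eventually_all]
    intro j
    exact (hzt j).eventually_ne hc0
  have hxne : ∀ᶠ t in atTop, ∀ j, x t j ≠ 0 := by
    filter_upwards [hzne] with t ht j
    rw [hxz t j]
    exact mul_ne_zero (by exact_mod_cast (hrpos t).ne') (ht j)
  refine ⟨hxne, ?_⟩
  -- ratio identity
  have hratio : ∀ t j, x t j / (‖x t j‖ : ℂ) = z t j / (‖z t j‖ : ℂ) := by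
    intro t j
    rw [hxz t j]
    by_cases h : z t j = 0
    · simp [h]
    · rw [norm_mul, Complex.norm_real, Real.norm_of_nonneg (hrpos t).le]
      push_cast
      rw [mul_div_mul_left _ _ (by exact_mod_cast (hrpos t).ne' : ((r t : ℂ)) ≠ 0)]
  have hRform : ∀ t, R t = (1 / (N : ℝ)) *
      ‖∑ j : Fin N, z t j / (‖z t j‖ : ℂ)‖ := by
    intro t
    rw [hR t]
    congr 2
    exact Finset.sum_congr rfl fun j _ => hratio t j
  -- limit of the sum
  have hcont : ContinuousAt (fun w : ℂ => w / (‖w‖ : ℂ)) c := by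
    apply ContinuousAt.div continuousAt_id
    · exact (Complex.continuous_ofReal.comp continuous_norm).continuousAt
    · exact_mod_cast (norm_ne_zero_iff.mpr hc0)
  have hterm : ∀ j, Tendsto (fun t => z t j / (‖z t j‖ : ℂ)) atTop
      (nhds (c / (‖c‖ : ℂ))) := fun j => hcont.tendsto.comp (hzt j)
  have hsumlim : Tendsto (fun t => ∑ j : Fin N, z t j / (‖z t j‖ : ℂ)) atTop
      (nhds ((N : ℂ) * (c / (‖c‖ : ℂ)))) := by
    have := tendsto_finset_sum Finset.univ (fun j _ => hterm j)
    simpa [Finset.sum_const, Finset.card_univ, mul_comm] using this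
  have habs : ‖(N : ℂ) * (c / (‖c‖ : ℂ))‖ = (N : ℝ) := by
    rw [norm_mul, norm_div, Complex.norm_real, Complex.norm_natCast,
      Real.norm_of_nonneg (norm_nonneg c), div_self (norm_ne_zero_iff.mpr hc0), mul_one]
  have hlim := ((continuous_norm.tendsto _).comp hsumlim).const_mul (1 / (N : ℝ))
  rw [habs, one_div_mul_cancel hN0] at hlim
  exact Tendsto.congr (fun t => (hRform t).symm) hlim
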